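/- Let r1, k1, r2, k2, p, b, e > 0 and m ∈ (0,1), and let (x*, y*) with x*, y* > 0 satisfy r1·(1−x*/k1) = p·(1−m)·y*/(1+b·(1−m)·x*) and r2·(1−y*/k2) = −e·p·(1−m)·x*/(1+b·(1−m)·x*). Then for all x > 0 and y > 0: e·(x − x*)·(r1·(1−x/k1) − p·(1−m)·y/(1+b·(1−m)·x)) + (1+b·(1−m)·x*)·(y − y*)·(r2·(1−y/k2) + e·p·(1−m)·x/(1+b·(1−m)·x)) = −e·(r1/k1 − b·p·(1−m)²·y*/((1+b·(1−m)·x*)·(1+b·(1−m)·x)))·(x − x*)² − (r2/k2)·(1+b·(1−m)·x*)·(y − y*)². -/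

import Mathlib

/-- Algebraic identity for the derivative of the Lyapunov function along
subsystem I: at the interior equilibrium `(xs, ys)` of the non-harvesting
subsystem, for all `x, y > 0` the displayed identity holds. -/
theorem stmt_8 (r1 k1 r2 k2 p b e m xs ys : ℝ)
    (hr1 : 0 < r1) (hk1 : 0 < k1) (hr2 : 0 < r2) (hk2 : 0 < k2)
    (hp : 0 < p) (hb : 0 < b) (he : 0 < e) (hm : m ∈ Set.Ioo (0 : ℝ) 1)
    (hxs : 0 < xs) (hys : 0 < ys)
    (heq1 : r1 * (1 - xs / k1) = p * (1 - m) * ys / (1 + b * (1 - m) * xs))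
    (heq2 : r2 * (1 - ys / k2) = -(e * p * (1 - m) * xs / (1 + b * (1 - m) * xs))) :
    ∀ x y : ℝ, 0 < x → 0 < y →
      e * (x - xs) * (r1 * (1 - x / k1) - p * (1 - m) * y / (1 + b * (1 - m) * x))
        + (1 + b * (1 - m) * xs) * (y - ys) *
            (r2 * (1 - y / k2) + e * p * (1 - m) * x / (1 + b * (1 - m) * x))
      = -(e * (r1 / k1 - b * p * (1 - m) ^ 2 * ys /
            ((1 + b * (1 - m) * xs) * (1 + b * (1 - m) * x))) * (x - xs) ^ 2)
        - r2 / k2 * (1 + b * (1 - m) * xs) * (y - ys) ^ 2 := by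
  intro x y hx hy
  have hm1 : 0 < 1 - m := by simpa using hm.2
  have hds : (0:ℝ) < 1 + b * (1 - m) * xs := by positivity
  have hdx : (0:ℝ) < 1 + b * (1 - m) * x := by positivity
  have e1 : r1 * (k1 - xs) * (1 + b * (1 - m) * xs) = p * (1 - m) * ys * k1 := by
    field_simp at heq1; linarith
  have e2 : r2 * (k2 - ys) * (1 + b * (1 - m) * xs) = -(e * p * (1 - m) * xs * k2) := by
    field_simp at heq2; linarith
  set D := 1 + b * (1 - m) * x with hDdef
  set Ds := 1 + b * (1 - m) * xs with hDsdef
  have hD' : D ≠ 0 := hdx.ne'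
  have hDs' : Ds ≠ 0 := hds.ne'
  clear_value D Ds
  clear heq1 heq2 hds hdx
  field_simp [hD', hDs', hk1.ne', hk2.ne']
  rw [hDdef, hDsdef]
  rw [hDsdef] at e1 e2
  linear_combination (e*(x-xs)*k2*(1+b*(1-m)*x)) * e1
    + ((y-ys)*k1*(1+b*(1-m)*x)*(1+b*(1-m)*xs)) * e2
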